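/- Let n ∈ ℕ, let s₀,…,s_{2n} be complex p×q matrices such that the truncated sequence s₀,…,s_{2n−1} is dominated by its first term (i.e., the column space of every s_j (j ≤ 2n−1) is contained in that of s₀ and the null space of s₀ is contained in that of every such s_j). Then the block Hankel matrix H_n = (s_{j+k})_{j,k=0}^n admits the factorization H_n = [[I_p, 0],[y₁ s₀⁺, I_{np}]] · diag(s₀, L_n) · [[I_q, s₀⁺ z₁],[0, I_{nq}]], where y₁ = col(s₁,…,s_n), z₁ = row(s₁,…,s_n), and L_n = G_{n−1} − y₁ s₀⁺ z₁ with G_{n−1} = (s_{j+k+2})_{j,k=0}^{n−1}. -/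

import Mathlib

open Matrix

/-- `X` is the Moore–Penrose inverse of `A`. -/
def IsMPInv {m n : Type*} [Fintype m] [Fintype n]
    (A : Matrix m n ℂ) (X : Matrix n m ℂ) : Prop :=
  A * X * A = A ∧ X * A * X = X ∧ (A * X)ᴴ = A * X ∧ (X * A)ᴴ = X * A


private lemma col_entry {p q : ℕ} (M : Matrix (Fin p) (Fin q) ℂ) (i : Fin p) (j : Fin q) :
    M.mulVec (Pi.single j 1) i = M i j := by
  simp [Matrix.mulVec_single]

private lemma left_absorb {p q : ℕ} {A B : Matrix (Fin p) (Fin q) ℂ}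
    {X : Matrix (Fin q) (Fin p) ℂ} (hA : A * X * A = A)
    (hr : LinearMap.range B.mulVecLin ≤ LinearMap.range A.mulVecLin) :
    A * X * B = B := by
  ext i j
  obtain ⟨u, hu⟩ := hr ⟨Pi.single j 1, rfl⟩
  have h2 : (A * X * B).mulVec (Pi.single j 1) = B.mulVec (Pi.single j 1) := by
    have hu' : A.mulVec u = B.mulVec (Pi.single j 1) := hu
    calc (A * X * B).mulVec (Pi.single j 1)
        = (A * X).mulVec (B.mulVec (Pi.single j 1)) := by
          rw [Matrix.mulVec_mulVec]
      _ = (A * X).mulVec (A.mulVec u) := by rw [hu']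
      _ = (A * X * A).mulVec u := by rw [Matrix.mulVec_mulVec]
      _ = A.mulVec u := by rw [hA]
      _ = B.mulVec (Pi.single j 1) := hu'
  have := congrFun h2 i
  rwa [col_entry, col_entry] at this

private lemma right_absorb {p q : ℕ} {A B : Matrix (Fin p) (Fin q) ℂ}
    {X : Matrix (Fin q) (Fin p) ℂ} (hA : A * X * A = A)
    (hk : LinearMap.ker A.mulVecLin ≤ LinearMap.ker B.mulVecLin) :
    B * X * A = B := by
  ext i j
  set v : Fin q → ℂ := Pi.single j 1 with hv
  have hker : A.mulVec (v - (X * A).mulVec v) = 0 := by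
    rw [Matrix.mulVec_sub, Matrix.mulVec_mulVec, ← Matrix.mul_assoc, hA, sub_self]
  have hBk : B.mulVec (v - (X * A).mulVec v) = 0 := hk hker
  rw [Matrix.mulVec_sub] at hBk
  have h2 : B.mulVec v = (B * X * A).mulVec v := by
    rw [sub_eq_zero.mp hBk, Matrix.mulVec_mulVec, ← Matrix.mul_assoc]
  have := congrFun h2 i
  rw [hv, col_entry, col_entry] at this
  exact this.symm

/-- Block LDU factorization of the block Hankel matrix H_n for a sequence whose
truncation (s_j)_{j=0}^{2n-1} is dominated by its first term. -/
theorem hankel_block_LDU {p q : ℕ} (n : ℕ) (hn : 1 ≤ n)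
    (s : ℕ → Matrix (Fin p) (Fin q) ℂ)
    (sInv : Matrix (Fin q) (Fin p) ℂ) (hs : IsMPInv (s 0) sInv)
    (hdom : ∀ j, j ≤ 2 * n - 1 →
      LinearMap.range ((s j).mulVecLin) ≤ LinearMap.range ((s 0).mulVecLin) ∧
      LinearMap.ker ((s 0).mulVecLin) ≤ LinearMap.ker ((s j).mulVecLin))
    (y₁ : Matrix (Fin n × Fin p) (Fin q) ℂ)
    (hy : y₁ = Matrix.of fun a c => s ((a.1 : ℕ) + 1) a.2 c)
    (z₁ : Matrix (Fin p) (Fin n × Fin q) ℂ)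
    (hz : z₁ = Matrix.of fun i b => s ((b.1 : ℕ) + 1) i b.2)
    (G : Matrix (Fin n × Fin p) (Fin n × Fin q) ℂ)
    (hG : G = Matrix.of fun a b => s ((a.1 : ℕ) + (b.1 : ℕ) + 2) a.2 b.2)
    (L : Matrix (Fin n × Fin p) (Fin n × Fin q) ℂ)
    (hL : L = G - y₁ * sInv * z₁) :
    (Matrix.of fun (a : Fin p ⊕ Fin n × Fin p) (b : Fin q ⊕ Fin n × Fin q) =>
        s ((Sum.elim (fun _ => 0) (fun x => (x.1 : ℕ) + 1) a) +
           (Sum.elim (fun _ => 0) (fun x => (x.1 : ℕ) + 1) b))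
          (Sum.elim id Prod.snd a) (Sum.elim id Prod.snd b)) =
      (Matrix.fromBlocks 1 0 (y₁ * sInv) 1 :
        Matrix (Fin p ⊕ Fin n × Fin p) (Fin p ⊕ Fin n × Fin p) ℂ) *
        Matrix.fromBlocks (s 0) 0 0 L *
        (Matrix.fromBlocks 1 (sInv * z₁) 0 1 :
          Matrix (Fin q ⊕ Fin n × Fin q) (Fin q ⊕ Fin n × Fin q) ℂ) := by
  have hA := hs.1
  have key1 : ∀ j : ℕ, j ≤ 2 * n - 1 → s 0 * sInv * s j = s j := fun j hj =>
    left_absorb hA (hdom j hj).1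
  have key2 : ∀ j : ℕ, j ≤ 2 * n - 1 → s j * sInv * s 0 = s j := fun j hj =>
    right_absorb hA (hdom j hj).2
  have hz' : s 0 * sInv * z₁ = z₁ := by
    ext i b
    have h := congrFun (congrFun (key1 ((b.1 : ℕ) + 1) (by omega)) i) b.2
    simp only [Matrix.mul_apply] at h ⊢
    simpa [hz] using h
  have hy' : y₁ * sInv * s 0 = y₁ := by
    ext a j
    have h := congrFun (congrFun (key2 ((a.1 : ℕ) + 1) (by omega)) a.2) j
    simp only [Matrix.mul_apply] at h ⊢
    simpa [hy] using h
  have hLHS : (Matrix.of fun (a : Fin p ⊕ Fin n × Fin p) (b : Fin q ⊕ Fin n × Fin q) =>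
        s ((Sum.elim (fun _ => 0) (fun x => (x.1 : ℕ) + 1) a) +
           (Sum.elim (fun _ => 0) (fun x => (x.1 : ℕ) + 1) b))
          (Sum.elim id Prod.snd a) (Sum.elim id Prod.snd b)) =
      Matrix.fromBlocks (s 0) z₁ y₁ G := by
    ext (a | a) (b | b) <;>
      simp [Matrix.fromBlocks, hy, hz, hG, Nat.add_comm, Nat.add_assoc, Nat.add_left_comm]
  have hD : y₁ * sInv * z₁ + L = G := by rw [hL]; abel
  rw [hLHS, Matrix.fromBlocks_multiply, Matrix.fromBlocks_multiply]
  simp only [Matrix.one_mul, Matrix.mul_one, Matrix.zero_mul, Matrix.mul_zero,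
    add_zero, zero_add]
  rw [hy', ← Matrix.mul_assoc (s 0), hz', ← Matrix.mul_assoc y₁, hD]
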